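/- The tableau system TC_SCI is complete: if an SCI-formula φ is SCI-valid, then φ has a tableau proof, i.e., there exists a closed TC_SCI-tableau with w⁻ : φ (w⁻ ∈ L⁻) at its root; equivalently, every fully expanded TC_SCI-tableau with w⁻ : φ at its root is closed. -/

import Mathlib

/-- SCI-formulas: atoms, negation, implication, and the identity connective. -/
inductive SCIForm : Type
  | atom : ℕ → SCIForm
  | not : SCIForm → SCIForm
  | imp : SCIForm → SCIForm → SCIForm
  | idn : SCIForm → SCIForm → SCIForm
  deriving DecidableEq

/-- An SCI-structure over a carrier type `U`: a set of designated values and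
operations interpreting ¬, →, ≡. -/
structure SCIStruct (U : Type) where
  D : Set U
  neg : U → U
  imp : U → U → U
  idn : U → U → U

/-- `M` is an SCI-model: `U` is non-empty, `D` is a proper subset of `U`, and the
three semantic conditions hold. -/
def IsSCIModel {U : Type} (M : SCIStruct U) : Prop :=
  Nonempty U ∧ M.D ≠ Set.univ ∧
  (∀ a : U, M.neg a ∈ M.D ↔ a ∉ M.D) ∧
  (∀ a b : U, M.imp a b ∈ M.D ↔ (a ∉ M.D ∨ b ∈ M.D)) ∧
  (∀ a b : U, M.idn a b ∈ M.D ↔ a = b)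

/-- A valuation in an SCI-structure: a homomorphism from formulas to `U`. -/
def IsValuation {U : Type} (M : SCIStruct U) (V : SCIForm → U) : Prop :=
  (∀ φ, V (SCIForm.not φ) = M.neg (V φ)) ∧
  (∀ φ ψ, V (SCIForm.imp φ ψ) = M.imp (V φ) (V ψ)) ∧
  (∀ φ ψ, V (SCIForm.idn φ ψ) = M.idn (V φ) (V ψ))

/-- A formula is SCI-satisfiable if its denotation is designated in some
SCI-model under some valuation. -/
def SCISatisfiable (φ : SCIForm) : Prop :=
  ∃ (U : Type) (M : SCIStruct U) (V : SCIForm → U),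
    IsSCIModel M ∧ IsValuation M V ∧ V φ ∈ M.D

/-- A formula is SCI-valid if its denotation is designated in every SCI-model
under every valuation. -/
def SCIValid (φ : SCIForm) : Prop :=
  ∀ (U : Type) (M : SCIStruct U) (V : SCIForm → U),
    IsSCIModel M → IsValuation M V → V φ ∈ M.D

/-- Labels: a Boolean polarity (`true` = the set L⁺, `false` = the set L⁻)
together with a natural number index; L⁺ and L⁻ are disjoint and countably
infinite. -/
abbrev Label : Type := Bool × ℕ

/-- `w` belongs to L⁺. -/
def posL (w : Label) : Prop := w.1 = true

/-- `w` belongs to L⁻. -/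
def negL (w : Label) : Prop := w.1 = false

/-- Expressions occurring on tableau branches: labelled formulas `w : φ`,
equalities `w = v`, inequalities `w ≠ v`, and the closure symbol ⊥. -/
inductive Node : Type
  | lf : Label → SCIForm → Node
  | eq : Label → Label → Node
  | neq : Label → Label → Node
  | bot : Node
  deriving DecidableEq

/-- `|φ|`: the number of occurrences of subformulas of `φ`. -/
def SCIForm.size : SCIForm → ℕ
  | SCIForm.atom _ => 1
  | SCIForm.not φ => SCIForm.size φ + 1
  | SCIForm.imp φ ψ => SCIForm.size φ + SCIForm.size ψ + 1
  | SCIForm.idn φ ψ => SCIForm.size φ + SCIForm.size ψ + 1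

/-- A label is fresh on a branch: no labelled formula on the branch carries it. -/
def freshL (v : Label) (l : List Node) : Prop := ∀ φ, Node.lf v φ ∉ l

/-- One application of a TC_SCI rule extending a single branch.  A branch is a
list of nodes (in order of introduction, root first) together with the set `E`
of labelled formulas to which a decomposition rule has already been applied
(each decomposition rule may be applied only once to a given labelled formula,
each equality rule only if its conclusion is not yet on the branch, and no rule
is applied to a closed branch). -/
inductive Extend : List Node → Set (Label × SCIForm) → List Node → Set (Label × SCIForm) → Prop
  | negP (l : List Node) (E : Set (Label × SCIForm)) (w v : Label) (φ : SCIForm) :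
      Node.bot ∉ l → posL w → Node.lf w (SCIForm.not φ) ∈ l → (w, SCIForm.not φ) ∉ E →
      negL v → freshL v l →
      Extend l E (l ++ [Node.lf v φ]) (insert (w, SCIForm.not φ) E)
  | negN (l : List Node) (E : Set (Label × SCIForm)) (w v : Label) (φ : SCIForm) :
      Node.bot ∉ l → negL w → Node.lf w (SCIForm.not φ) ∈ l → (w, SCIForm.not φ) ∉ E →
      posL v → freshL v l →
      Extend l E (l ++ [Node.lf v φ]) (insert (w, SCIForm.not φ) E)
  | impP1 (l : List Node) (E : Set (Label × SCIForm)) (w v u : Label) (φ ψ : SCIForm) :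
      Node.bot ∉ l → posL w → Node.lf w (SCIForm.imp φ ψ) ∈ l → (w, SCIForm.imp φ ψ) ∉ E →
      negL v → negL u → v ≠ u → freshL v l → freshL u l →
      Extend l E (l ++ [Node.lf v φ, Node.lf u ψ]) (insert (w, SCIForm.imp φ ψ) E)
  | impP2 (l : List Node) (E : Set (Label × SCIForm)) (w v u : Label) (φ ψ : SCIForm) :
      Node.bot ∉ l → posL w → Node.lf w (SCIForm.imp φ ψ) ∈ l → (w, SCIForm.imp φ ψ) ∉ E →
      negL v → posL u → v ≠ u → freshL v l → freshL u l →
      Extend l E (l ++ [Node.lf v φ, Node.lf u ψ]) (insert (w, SCIForm.imp φ ψ) E)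
  | impP3 (l : List Node) (E : Set (Label × SCIForm)) (w v u : Label) (φ ψ : SCIForm) :
      Node.bot ∉ l → posL w → Node.lf w (SCIForm.imp φ ψ) ∈ l → (w, SCIForm.imp φ ψ) ∉ E →
      posL v → posL u → v ≠ u → freshL v l → freshL u l →
      Extend l E (l ++ [Node.lf v φ, Node.lf u ψ]) (insert (w, SCIForm.imp φ ψ) E)
  | impN (l : List Node) (E : Set (Label × SCIForm)) (w v u : Label) (φ ψ : SCIForm) :
      Node.bot ∉ l → negL w → Node.lf w (SCIForm.imp φ ψ) ∈ l → (w, SCIForm.imp φ ψ) ∉ E →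
      posL v → negL u → v ≠ u → freshL v l → freshL u l →
      Extend l E (l ++ [Node.lf v φ, Node.lf u ψ]) (insert (w, SCIForm.imp φ ψ) E)
  | idnP1 (l : List Node) (E : Set (Label × SCIForm)) (w v u : Label) (φ ψ : SCIForm) :
      Node.bot ∉ l → posL w → Node.lf w (SCIForm.idn φ ψ) ∈ l → (w, SCIForm.idn φ ψ) ∉ E →
      posL v → posL u → v ≠ u → freshL v l → freshL u l →
      Extend l E (l ++ [Node.lf v φ, Node.lf u ψ, Node.eq v u]) (insert (w, SCIForm.idn φ ψ) E)
  | idnP2 (l : List Node) (E : Set (Label × SCIForm)) (w v u : Label) (φ ψ : SCIForm) :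
      Node.bot ∉ l → posL w → Node.lf w (SCIForm.idn φ ψ) ∈ l → (w, SCIForm.idn φ ψ) ∉ E →
      negL v → negL u → v ≠ u → freshL v l → freshL u l →
      Extend l E (l ++ [Node.lf v φ, Node.lf u ψ, Node.eq v u]) (insert (w, SCIForm.idn φ ψ) E)
  | idnN1 (l : List Node) (E : Set (Label × SCIForm)) (w v u : Label) (φ ψ : SCIForm) :
      Node.bot ∉ l → negL w → Node.lf w (SCIForm.idn φ ψ) ∈ l → (w, SCIForm.idn φ ψ) ∉ E →
      posL v → posL u → v ≠ u → freshL v l → freshL u l →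
      Extend l E (l ++ [Node.lf v φ, Node.lf u ψ, Node.neq v u]) (insert (w, SCIForm.idn φ ψ) E)
  | idnN2 (l : List Node) (E : Set (Label × SCIForm)) (w v u : Label) (φ ψ : SCIForm) :
      Node.bot ∉ l → negL w → Node.lf w (SCIForm.idn φ ψ) ∈ l → (w, SCIForm.idn φ ψ) ∉ E →
      posL v → negL u → v ≠ u → freshL v l → freshL u l →
      Extend l E (l ++ [Node.lf v φ, Node.lf u ψ]) (insert (w, SCIForm.idn φ ψ) E)
  | idnN3 (l : List Node) (E : Set (Label × SCIForm)) (w v u : Label) (φ ψ : SCIForm) :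
      Node.bot ∉ l → negL w → Node.lf w (SCIForm.idn φ ψ) ∈ l → (w, SCIForm.idn φ ψ) ∉ E →
      negL v → posL u → v ≠ u → freshL v l → freshL u l →
      Extend l E (l ++ [Node.lf v φ, Node.lf u ψ]) (insert (w, SCIForm.idn φ ψ) E)
  | idnN4 (l : List Node) (E : Set (Label × SCIForm)) (w v u : Label) (φ ψ : SCIForm) :
      Node.bot ∉ l → negL w → Node.lf w (SCIForm.idn φ ψ) ∈ l → (w, SCIForm.idn φ ψ) ∉ E →
      negL v → negL u → v ≠ u → freshL v l → freshL u l →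
      Extend l E (l ++ [Node.lf v φ, Node.lf u ψ, Node.neq v u]) (insert (w, SCIForm.idn φ ψ) E)
  | eqNeg (l : List Node) (E : Set (Label × SCIForm)) (w v u y : Label) (φ ψ : SCIForm) :
      Node.bot ∉ l → Node.lf w φ ∈ l → Node.lf v ψ ∈ l → Node.eq w v ∈ l →
      Node.lf u (SCIForm.not φ) ∈ l → Node.lf y (SCIForm.not ψ) ∈ l →
      Node.eq u y ∉ l →
      Extend l E (l ++ [Node.eq u y]) E
  | eqImp (l : List Node) (E : Set (Label × SCIForm)) (w v w' v' x z : Label) (φ ψ χ θ : SCIForm) :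
      Node.bot ∉ l → Node.lf w φ ∈ l → Node.lf v ψ ∈ l → Node.eq w v ∈ l →
      Node.lf w' χ ∈ l → Node.lf v' θ ∈ l → Node.eq w' v' ∈ l →
      Node.lf x (SCIForm.imp φ χ) ∈ l → Node.lf z (SCIForm.imp ψ θ) ∈ l →
      Node.eq x z ∉ l →
      Extend l E (l ++ [Node.eq x z]) E
  | eqIdn (l : List Node) (E : Set (Label × SCIForm)) (w v w' v' x z : Label) (φ ψ χ θ : SCIForm) :
      Node.bot ∉ l → Node.lf w φ ∈ l → Node.lf v ψ ∈ l → Node.eq w v ∈ l →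
      Node.lf w' χ ∈ l → Node.lf v' θ ∈ l → Node.eq w' v' ∈ l →
      Node.lf x (SCIForm.idn φ χ) ∈ l → Node.lf z (SCIForm.idn ψ θ) ∈ l →
      Node.eq x z ∉ l →
      Extend l E (l ++ [Node.eq x z]) E
  | ruleF (l : List Node) (E : Set (Label × SCIForm)) (w v : Label) (φ : SCIForm) :
      Node.bot ∉ l → Node.lf w φ ∈ l → Node.lf v φ ∈ l → Node.eq w v ∉ l →
      Extend l E (l ++ [Node.eq w v]) E
  | ruleSym (l : List Node) (E : Set (Label × SCIForm)) (w v : Label) :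
      Node.bot ∉ l → Node.eq w v ∈ l → Node.eq v w ∉ l →
      Extend l E (l ++ [Node.eq v w]) E
  | ruleTran (l : List Node) (E : Set (Label × SCIForm)) (w v u : Label) :
      Node.bot ∉ l → Node.eq w v ∈ l → Node.eq v u ∈ l → Node.eq w u ∉ l →
      Extend l E (l ++ [Node.eq w u]) E
  | bot1 (l : List Node) (E : Set (Label × SCIForm)) (w v : Label) :
      Node.bot ∉ l → Node.eq w v ∈ l → Node.neq w v ∈ l →
      Extend l E (l ++ [Node.bot]) E
  | bot2 (l : List Node) (E : Set (Label × SCIForm)) (w v : Label) :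
      Node.bot ∉ l → posL w → negL v → Node.eq w v ∈ l →
      Extend l E (l ++ [Node.bot]) E

/-- `ClosedTab l E` holds iff there is a closed TC_SCI-tableau all of whose
branches extend the branch `l` (with `E` the set of labelled formulas already
decomposed on `l`): either a closure rule applies to `l`, or some rule of
TC_SCI can be applied so that all resulting branches carry closed tableaux. -/
inductive ClosedTab : List Node → Set (Label × SCIForm) → Prop
  | clos1 (l : List Node) (E : Set (Label × SCIForm)) (w v : Label) :
      Node.eq w v ∈ l → Node.neq w v ∈ l → ClosedTab l E
  | clos2 (l : List Node) (E : Set (Label × SCIForm)) (w v : Label) :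
      posL w → negL v → Node.eq w v ∈ l → ClosedTab l E
  | negP (l : List Node) (E : Set (Label × SCIForm)) (w v : Label) (φ : SCIForm) :
      posL w → Node.lf w (SCIForm.not φ) ∈ l → (w, SCIForm.not φ) ∉ E →
      negL v → freshL v l →
      ClosedTab (l ++ [Node.lf v φ]) (insert (w, SCIForm.not φ) E) →
      ClosedTab l E
  | negN (l : List Node) (E : Set (Label × SCIForm)) (w v : Label) (φ : SCIForm) :
      negL w → Node.lf w (SCIForm.not φ) ∈ l → (w, SCIForm.not φ) ∉ E →
      posL v → freshL v l →
      ClosedTab (l ++ [Node.lf v φ]) (insert (w, SCIForm.not φ) E) →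
      ClosedTab l E
  | impP (l : List Node) (E : Set (Label × SCIForm)) (w : Label) (φ ψ : SCIForm)
      (v1 u1 v2 u2 v3 u3 : Label) :
      posL w → Node.lf w (SCIForm.imp φ ψ) ∈ l → (w, SCIForm.imp φ ψ) ∉ E →
      negL v1 → negL u1 → v1 ≠ u1 → freshL v1 l → freshL u1 l →
      negL v2 → posL u2 → v2 ≠ u2 → freshL v2 l → freshL u2 l →
      posL v3 → posL u3 → v3 ≠ u3 → freshL v3 l → freshL u3 l →
      ClosedTab (l ++ [Node.lf v1 φ, Node.lf u1 ψ]) (insert (w, SCIForm.imp φ ψ) E) →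
      ClosedTab (l ++ [Node.lf v2 φ, Node.lf u2 ψ]) (insert (w, SCIForm.imp φ ψ) E) →
      ClosedTab (l ++ [Node.lf v3 φ, Node.lf u3 ψ]) (insert (w, SCIForm.imp φ ψ) E) →
      ClosedTab l E
  | impN (l : List Node) (E : Set (Label × SCIForm)) (w v u : Label) (φ ψ : SCIForm) :
      negL w → Node.lf w (SCIForm.imp φ ψ) ∈ l → (w, SCIForm.imp φ ψ) ∉ E →
      posL v → negL u → v ≠ u → freshL v l → freshL u l →
      ClosedTab (l ++ [Node.lf v φ, Node.lf u ψ]) (insert (w, SCIForm.imp φ ψ) E) →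
      ClosedTab l E
  | idnP (l : List Node) (E : Set (Label × SCIForm)) (w : Label) (φ ψ : SCIForm)
      (v1 u1 v2 u2 : Label) :
      posL w → Node.lf w (SCIForm.idn φ ψ) ∈ l → (w, SCIForm.idn φ ψ) ∉ E →
      posL v1 → posL u1 → v1 ≠ u1 → freshL v1 l → freshL u1 l →
      negL v2 → negL u2 → v2 ≠ u2 → freshL v2 l → freshL u2 l →
      ClosedTab (l ++ [Node.lf v1 φ, Node.lf u1 ψ, Node.eq v1 u1]) (insert (w, SCIForm.idn φ ψ) E) →
      ClosedTab (l ++ [Node.lf v2 φ, Node.lf u2 ψ, Node.eq v2 u2]) (insert (w, SCIForm.idn φ ψ) E) →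
      ClosedTab l E
  | idnN (l : List Node) (E : Set (Label × SCIForm)) (w : Label) (φ ψ : SCIForm)
      (v1 u1 v2 u2 v3 u3 v4 u4 : Label) :
      negL w → Node.lf w (SCIForm.idn φ ψ) ∈ l → (w, SCIForm.idn φ ψ) ∉ E →
      posL v1 → posL u1 → v1 ≠ u1 → freshL v1 l → freshL u1 l →
      posL v2 → negL u2 → v2 ≠ u2 → freshL v2 l → freshL u2 l →
      negL v3 → posL u3 → v3 ≠ u3 → freshL v3 l → freshL u3 l →
      negL v4 → negL u4 → v4 ≠ u4 → freshL v4 l → freshL u4 l →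
      ClosedTab (l ++ [Node.lf v1 φ, Node.lf u1 ψ, Node.neq v1 u1]) (insert (w, SCIForm.idn φ ψ) E) →
      ClosedTab (l ++ [Node.lf v2 φ, Node.lf u2 ψ]) (insert (w, SCIForm.idn φ ψ) E) →
      ClosedTab (l ++ [Node.lf v3 φ, Node.lf u3 ψ]) (insert (w, SCIForm.idn φ ψ) E) →
      ClosedTab (l ++ [Node.lf v4 φ, Node.lf u4 ψ, Node.neq v4 u4]) (insert (w, SCIForm.idn φ ψ) E) →
      ClosedTab l E
  | eqNeg (l : List Node) (E : Set (Label × SCIForm)) (w v u y : Label) (φ ψ : SCIForm) :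
      Node.lf w φ ∈ l → Node.lf v ψ ∈ l → Node.eq w v ∈ l →
      Node.lf u (SCIForm.not φ) ∈ l → Node.lf y (SCIForm.not ψ) ∈ l →
      Node.eq u y ∉ l →
      ClosedTab (l ++ [Node.eq u y]) E → ClosedTab l E
  | eqImp (l : List Node) (E : Set (Label × SCIForm)) (w v w' v' x z : Label) (φ ψ χ θ : SCIForm) :
      Node.lf w φ ∈ l → Node.lf v ψ ∈ l → Node.eq w v ∈ l →
      Node.lf w' χ ∈ l → Node.lf v' θ ∈ l → Node.eq w' v' ∈ l →
      Node.lf x (SCIForm.imp φ χ) ∈ l → Node.lf z (SCIForm.imp ψ θ) ∈ l →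
      Node.eq x z ∉ l →
      ClosedTab (l ++ [Node.eq x z]) E → ClosedTab l E
  | eqIdn (l : List Node) (E : Set (Label × SCIForm)) (w v w' v' x z : Label) (φ ψ χ θ : SCIForm) :
      Node.lf w φ ∈ l → Node.lf v ψ ∈ l → Node.eq w v ∈ l →
      Node.lf w' χ ∈ l → Node.lf v' θ ∈ l → Node.eq w' v' ∈ l →
      Node.lf x (SCIForm.idn φ χ) ∈ l → Node.lf z (SCIForm.idn ψ θ) ∈ l →
      Node.eq x z ∉ l →
      ClosedTab (l ++ [Node.eq x z]) E → ClosedTab l E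
  | ruleF (l : List Node) (E : Set (Label × SCIForm)) (w v : Label) (φ : SCIForm) :
      Node.lf w φ ∈ l → Node.lf v φ ∈ l → Node.eq w v ∉ l →
      ClosedTab (l ++ [Node.eq w v]) E → ClosedTab l E
  | ruleSym (l : List Node) (E : Set (Label × SCIForm)) (w v : Label) :
      Node.eq w v ∈ l → Node.eq v w ∉ l →
      ClosedTab (l ++ [Node.eq v w]) E → ClosedTab l E
  | ruleTran (l : List Node) (E : Set (Label × SCIForm)) (w v u : Label) :
      Node.eq w v ∈ l → Node.eq v u ∈ l → Node.eq w u ∉ l →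
      ClosedTab (l ++ [Node.eq w u]) E → ClosedTab l E

/-! ### Auxiliary development for completeness -/

open Classical

namespace SCIC

/-- Boolean truth evaluation on formulas, identity read as syntactic equality.
Used for the "off-branch" part of the canonical model. -/
def tval : SCIForm → Bool
  | SCIForm.atom _ => false
  | SCIForm.not φ => ! tval φ
  | SCIForm.imp φ ψ => (! tval φ) || tval ψ
  | SCIForm.idn φ ψ => decide (φ = ψ)

/-- Saturation of an open branch. -/
structure Sat (l : List Node) (E : Set (Label × SCIForm)) : Prop where
  nobot : Node.bot ∉ l
  s1 : ∀ w v, Node.eq w v ∈ l → Node.neq w v ∉ l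
  s2 : ∀ w v, posL w → negL v → Node.eq w v ∉ l
  symm : ∀ w v, Node.eq w v ∈ l → Node.eq v w ∈ l
  tran : ∀ w v u, Node.eq w v ∈ l → Node.eq v u ∈ l → Node.eq w u ∈ l
  fr : ∀ w v φ, Node.lf w φ ∈ l → Node.lf v φ ∈ l → Node.eq w v ∈ l
  eqNeg : ∀ w v u y φ ψ, Node.lf w φ ∈ l → Node.lf v ψ ∈ l → Node.eq w v ∈ l →
    Node.lf u (SCIForm.not φ) ∈ l → Node.lf y (SCIForm.not ψ) ∈ l → Node.eq u y ∈ l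
  eqImp : ∀ w v w' v' x z φ ψ χ θ, Node.lf w φ ∈ l → Node.lf v ψ ∈ l → Node.eq w v ∈ l →
    Node.lf w' χ ∈ l → Node.lf v' θ ∈ l → Node.eq w' v' ∈ l →
    Node.lf x (SCIForm.imp φ χ) ∈ l → Node.lf z (SCIForm.imp ψ θ) ∈ l → Node.eq x z ∈ l
  eqIdn : ∀ w v w' v' x z φ ψ χ θ, Node.lf w φ ∈ l → Node.lf v ψ ∈ l → Node.eq w v ∈ l →
    Node.lf w' χ ∈ l → Node.lf v' θ ∈ l → Node.eq w' v' ∈ l →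
    Node.lf x (SCIForm.idn φ χ) ∈ l → Node.lf z (SCIForm.idn ψ θ) ∈ l → Node.eq x z ∈ l
  dec : ∀ w φ, Node.lf w φ ∈ l → (∀ n, φ ≠ SCIForm.atom n) → (w, φ) ∈ E

/-- The witness property for a decomposed labelled formula. -/
def WitP (l : List Node) (p : Label × SCIForm) : Prop :=
  Node.lf p.1 p.2 ∈ l ∧
  match p.2 with
  | SCIForm.atom _ => True
  | SCIForm.not φ => ∃ v, Node.lf v φ ∈ l ∧ v.1 = !p.1.1
  | SCIForm.imp φ ψ => ∃ v u, Node.lf v φ ∈ l ∧ Node.lf u ψ ∈ l ∧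
      (if p.1.1 then (v.1 = false ∨ u.1 = true) else (v.1 = true ∧ u.1 = false))
  | SCIForm.idn φ ψ => ∃ v u, Node.lf v φ ∈ l ∧ Node.lf u ψ ∈ l ∧
      (if p.1.1 then Node.eq v u ∈ l else (v.1 ≠ u.1 ∨ Node.neq v u ∈ l))

def WitAll (l : List Node) (E : Set (Label × SCIForm)) : Prop := ∀ p ∈ E, WitP l p

/-! ### the canonical model over a saturated open branch -/

/-- Equivalence class of a label. -/
def cls (l : List Node) (w : Label) : Set Label := {v | Node.eq w v ∈ l}

/-- A class is "positive". -/
def PosC (c : Set Label) : Prop := ∃ w ∈ c, w.1 = true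

/-- A formula with prescribed truth value. -/
noncomputable def bb (P : Prop) : SCIForm :=
  if P then SCIForm.not (SCIForm.atom 0) else SCIForm.atom 0

lemma tval_bb (P : Prop) : tval (bb P) = true ↔ P := by
  unfold bb; split <;> simp [tval] <;> assumption

/-- Carrier of the canonical model. -/
abbrev Um : Type := Set Label ⊕ SCIForm

/-- Designated values. -/
theorem Set.mem_def {α : Type*} {a : α} {s : Set α} : a ∈ s ↔ s a := Iff.rfl

def Dm : Set Um := fun x =>
  Sum.elim (fun c => PosC c) (fun ψ => tval ψ = true) x

noncomputable def negOp (l : List Node) : Um → Um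
  | Sum.inr ψ => Sum.inr (SCIForm.not ψ)
  | Sum.inl c =>
    if h : ∃ v φ w, Node.lf w φ ∈ l ∧ cls l w = c ∧ Node.lf v (SCIForm.not φ) ∈ l
    then Sum.inl (cls l h.choose)
    else Sum.inr (bb (¬ PosC c))

noncomputable def impOp (l : List Node) : Um → Um → Um
  | Sum.inl c, Sum.inl d =>
    if h : ∃ x', ∃ φ ψ w v, Node.lf w φ ∈ l ∧ cls l w = c ∧ Node.lf v ψ ∈ l ∧ cls l v = d ∧
        Node.lf x' (SCIForm.imp φ ψ) ∈ l
    then Sum.inl (cls l h.choose)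
    else Sum.inr (bb (¬ PosC c ∨ PosC d))
  | Sum.inl c, Sum.inr ψ => Sum.inr (bb (¬ PosC c ∨ tval ψ = true))
  | Sum.inr ψ, Sum.inl d => Sum.inr (bb (¬ tval ψ = true ∨ PosC d))
  | Sum.inr ψ, Sum.inr χ => Sum.inr (SCIForm.imp ψ χ)

noncomputable def idnOp (l : List Node) : Um → Um → Um
  | Sum.inl c, Sum.inl d =>
    if h : ∃ x', ∃ φ ψ w v, Node.lf w φ ∈ l ∧ cls l w = c ∧ Node.lf v ψ ∈ l ∧ cls l v = d ∧
        Node.lf x' (SCIForm.idn φ ψ) ∈ l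
    then Sum.inl (cls l h.choose)
    else Sum.inr (bb (c = d))
  | Sum.inl _, Sum.inr _ => Sum.inr (SCIForm.atom 0)
  | Sum.inr _, Sum.inl _ => Sum.inr (SCIForm.atom 0)
  | Sum.inr ψ, Sum.inr χ => Sum.inr (SCIForm.idn ψ χ)

noncomputable def Mm (l : List Node) : SCIStruct Um := ⟨Dm, negOp l, impOp l, idnOp l⟩

noncomputable def Vd (l : List Node) : SCIForm → Um
  | SCIForm.atom n =>
    if h : ∃ w, Node.lf w (SCIForm.atom n) ∈ l then Sum.inl (cls l h.choose)
    else Sum.inr (SCIForm.atom n)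
  | SCIForm.not φ => negOp l (Vd l φ)
  | SCIForm.imp φ ψ => impOp l (Vd l φ) (Vd l ψ)
  | SCIForm.idn φ ψ => idnOp l (Vd l φ) (Vd l ψ)

section Model

variable {l : List Node} {E : Set (Label × SCIForm)} (hs : Sat l E) (hw : WitAll l E)

include hs

lemma polEq {a b : Label} (h : Node.eq a b ∈ l) : a.1 = b.1 := by
  cases ha : a.1 <;> cases hb : b.1
  · rfl
  · exact absurd h (by
      have := hs.s2 b a hb ha
      intro hmem; exact this (hs.symm _ _ hmem))
  · exact absurd h (hs.s2 a b ha hb)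
  · rfl

lemma cls_eq_of {a b : Label} (h : Node.eq a b ∈ l) : cls l a = cls l b := by
  ext v
  constructor
  · intro hv; exact hs.tran _ _ _ (hs.symm _ _ h) hv
  · intro hv; exact hs.tran _ _ _ h hv

lemma mem_cls_self {w : Label} {φ : SCIForm} (h : Node.lf w φ ∈ l) : w ∈ cls l w :=
  hs.fr w w φ h h

lemma eq_of_cls_eq {w v : Label} {φ ψ : SCIForm} (hw' : Node.lf w φ ∈ l)
    (hv : Node.lf v ψ ∈ l) (h : cls l w = cls l v) : Node.eq w v ∈ l := by
  have : v ∈ cls l w := h ▸ mem_cls_self hs hv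
  exact this

lemma PosC_cls {w : Label} {φ : SCIForm} (h : Node.lf w φ ∈ l) :
    PosC (cls l w) ↔ w.1 = true := by
  constructor
  · rintro ⟨v, hv, hvp⟩
    have := polEq hs (show Node.eq w v ∈ l from hv)
    rw [this, hvp]
  · intro hp; exact ⟨w, mem_cls_self hs h, hp⟩

end Model

end SCIC
namespace SCIC
section Model2

variable {l : List Node} {E : Set (Label × SCIForm)} (hs : Sat l E) (hw : WitAll l E)

include hs

lemma negOp_lf {w v : Label} {φ : SCIForm} (hφ : Node.lf w φ ∈ l)
    (hv : Node.lf v (SCIForm.not φ) ∈ l) :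
    negOp l (Sum.inl (cls l w)) = Sum.inl (cls l v) := by
  have hex : ∃ v' φ' w', Node.lf w' φ' ∈ l ∧ cls l w' = cls l w ∧
      Node.lf v' (SCIForm.not φ') ∈ l := ⟨v, φ, w, hφ, rfl, hv⟩
  simp only [negOp, dif_pos hex]
  obtain ⟨φ₀, w₀, h1, h2, h3⟩ := hex.choose_spec
  have heq : Node.eq w₀ w ∈ l := eq_of_cls_eq hs h1 hφ h2
  exact congrArg Sum.inl (cls_eq_of hs (hs.eqNeg w₀ w _ v φ₀ φ h1 hφ heq h3 hv))

lemma impOp_lf {a b x : Label} {φ ψ : SCIForm} (ha : Node.lf a φ ∈ l)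
    (hb : Node.lf b ψ ∈ l) (hx : Node.lf x (SCIForm.imp φ ψ) ∈ l) :
    impOp l (Sum.inl (cls l a)) (Sum.inl (cls l b)) = Sum.inl (cls l x) := by
  have hex : ∃ x', ∃ φ' ψ' w' v', Node.lf w' φ' ∈ l ∧ cls l w' = cls l a ∧
      Node.lf v' ψ' ∈ l ∧ cls l v' = cls l b ∧ Node.lf x' (SCIForm.imp φ' ψ') ∈ l :=
    ⟨x, φ, ψ, a, b, ha, rfl, hb, rfl, hx⟩
  simp only [impOp, dif_pos hex]
  obtain ⟨φ₀, ψ₀, w₀, v₀, h1, h2, h3, h4, h5⟩ := hex.choose_spec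
  have he1 : Node.eq w₀ a ∈ l := eq_of_cls_eq hs h1 ha h2
  have he2 : Node.eq v₀ b ∈ l := eq_of_cls_eq hs h3 hb h4
  exact congrArg Sum.inl (cls_eq_of hs (hs.eqImp w₀ a v₀ b _ x φ₀ φ ψ₀ ψ h1 ha he1 h3 hb he2 h5 hx))

lemma idnOp_lf {a b x : Label} {φ ψ : SCIForm} (ha : Node.lf a φ ∈ l)
    (hb : Node.lf b ψ ∈ l) (hx : Node.lf x (SCIForm.idn φ ψ) ∈ l) :
    idnOp l (Sum.inl (cls l a)) (Sum.inl (cls l b)) = Sum.inl (cls l x) := by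
  have hex : ∃ x', ∃ φ' ψ' w' v', Node.lf w' φ' ∈ l ∧ cls l w' = cls l a ∧
      Node.lf v' ψ' ∈ l ∧ cls l v' = cls l b ∧ Node.lf x' (SCIForm.idn φ' ψ') ∈ l :=
    ⟨x, φ, ψ, a, b, ha, rfl, hb, rfl, hx⟩
  simp only [idnOp, dif_pos hex]
  obtain ⟨φ₀, ψ₀, w₀, v₀, h1, h2, h3, h4, h5⟩ := hex.choose_spec
  have he1 : Node.eq w₀ a ∈ l := eq_of_cls_eq hs h1 ha h2
  have he2 : Node.eq v₀ b ∈ l := eq_of_cls_eq hs h3 hb h4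
  exact congrArg Sum.inl (cls_eq_of hs (hs.eqIdn w₀ a v₀ b _ x φ₀ φ ψ₀ ψ h1 ha he1 h3 hb he2 h5 hx))

include hw

lemma negD : ∀ x : Um, negOp l x ∈ Dm ↔ x ∉ Dm := by
  rintro (c | ψ)
  · by_cases h : ∃ v' φ' w', Node.lf w' φ' ∈ l ∧ cls l w' = c ∧
        Node.lf v' (SCIForm.not φ') ∈ l
    · simp only [negOp, dif_pos h]
      obtain ⟨φ₀, w₀, h1, h2, h3⟩ := h.choose_spec
      obtain ⟨-, u, hu, hupol⟩ := hw _ (hs.dec _ _ h3 (by intro n hn; cases hn))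
      have hp1 : PosC (cls l h.choose) ↔ h.choose.1 = true := PosC_cls hs h3
      have hp2 : PosC c ↔ w₀.1 = true := h2 ▸ PosC_cls hs h1
      have hpol : u.1 = w₀.1 := polEq hs (hs.fr u w₀ φ₀ hu h1)
      show PosC (cls l h.choose) ↔ ¬ PosC c
      rw [hp1, hp2, ← hpol, hupol]
      cases h.choose.1 <;> simp
    · simp only [negOp, dif_neg h]
      show tval (bb _) = true ↔ ¬ PosC c
      rw [tval_bb]
  · show tval (SCIForm.not ψ) = true ↔ ¬ (tval ψ = true)
    simp [tval]

lemma impD : ∀ x y : Um, impOp l x y ∈ Dm ↔ (x ∉ Dm ∨ y ∈ Dm) := by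
  rintro (c | ψ) (d | χ)
  · by_cases h : ∃ x', ∃ φ' ψ' w' v', Node.lf w' φ' ∈ l ∧ cls l w' = c ∧
        Node.lf v' ψ' ∈ l ∧ cls l v' = d ∧ Node.lf x' (SCIForm.imp φ' ψ') ∈ l
    · simp only [impOp, dif_pos h]
      obtain ⟨φ₀, ψ₀, w₀, v₀, h1, h2, h3, h4, h5⟩ := h.choose_spec
      obtain ⟨-, a, b, ha, hb, hcond⟩ := hw _ (hs.dec _ _ h5 (by intro n hn; cases hn))
      have hpx : PosC (cls l h.choose) ↔ h.choose.1 = true := PosC_cls hs h5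
      have hpc : PosC c ↔ w₀.1 = true := h2 ▸ PosC_cls hs h1
      have hpd : PosC d ↔ v₀.1 = true := h4 ▸ PosC_cls hs h3
      have hpa : a.1 = w₀.1 := polEq hs (hs.fr a w₀ φ₀ ha h1)
      have hpb : b.1 = v₀.1 := polEq hs (hs.fr b v₀ ψ₀ hb h3)
      show PosC (cls l h.choose) ↔ (¬ PosC c ∨ PosC d)
      rw [hpx, hpc, hpd, ← hpa, ← hpb]
      cases hxp : h.choose.1 <;> rw [hxp] at hcond <;> simp at hcond ⊢
      · rw [hcond.1, hcond.2]; simp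
      · rcases hcond with h' | h' <;> rw [h'] <;> simp
    · simp only [impOp, dif_neg h]
      show tval (bb _) = true ↔ _
      rw [tval_bb]; exact Iff.rfl
  · show tval (bb _) = true ↔ _
    rw [tval_bb]; exact Iff.rfl
  · show tval (bb _) = true ↔ _
    rw [tval_bb]; exact Iff.rfl
  · show tval (SCIForm.imp ψ χ) = true ↔ _
    simp only [Dm, Sum.elim_inr, tval, Bool.or_eq_true, Bool.not_eq_true', Set.mem_def]
    cases hψ : tval ψ <;> simp [Dm, Set.mem_def, hψ]

lemma idnD : ∀ x y : Um, idnOp l x y ∈ Dm ↔ x = y := by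
  rintro (c | ψ) (d | χ)
  · by_cases h : ∃ x', ∃ φ' ψ' w' v', Node.lf w' φ' ∈ l ∧ cls l w' = c ∧
        Node.lf v' ψ' ∈ l ∧ cls l v' = d ∧ Node.lf x' (SCIForm.idn φ' ψ') ∈ l
    · simp only [idnOp, dif_pos h]
      obtain ⟨φ₀, ψ₀, w₀, v₀, h1, h2, h3, h4, h5⟩ := h.choose_spec
      obtain ⟨-, a, b, ha, hb, hcond⟩ := hw _ (hs.dec _ _ h5 (by intro n hn; cases hn))
      have hpx : PosC (cls l h.choose) ↔ h.choose.1 = true := PosC_cls hs h5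
      have hca : cls l a = c := h2 ▸ cls_eq_of hs (hs.fr a w₀ φ₀ ha h1)
      have hcb : cls l b = d := h4 ▸ cls_eq_of hs (hs.fr b v₀ ψ₀ hb h3)
      show PosC (cls l h.choose) ↔ Sum.inl c = Sum.inl d
      rw [hpx, Sum.inl.injEq]
      cases hxp : h.choose.1
      · rw [hxp] at hcond
        simp only [Bool.false_eq_true, if_false] at hcond
        simp only [Bool.false_eq_true, false_iff]
        intro hcd
        have hab : Node.eq a b ∈ l :=
          eq_of_cls_eq hs ha hb (by rw [hca, hcb, hcd])
        rcases hcond with h' | h'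
        · exact h' (polEq hs hab)
        · exact hs.s1 a b hab h'
      · rw [hxp] at hcond
        simp only [if_true] at hcond
        simp only [true_iff]
        rw [← hca, ← hcb]
        exact cls_eq_of hs hcond
    · simp only [idnOp, dif_neg h]
      show tval (bb _) = true ↔ _
      rw [tval_bb, Sum.inl.injEq]
  · show tval (SCIForm.atom 0) = true ↔ _
    simp [tval]
  · show tval (SCIForm.atom 0) = true ↔ _
    simp [tval]
  · show tval (SCIForm.idn ψ χ) = true ↔ _
    simp only [Dm, Sum.elim_inr, tval, decide_eq_true_eq, Sum.inr.injEq, SCIForm.idn.injEq]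

lemma Vd_lf : ∀ (φ : SCIForm) (w : Label), Node.lf w φ ∈ l → Vd l φ = Sum.inl (cls l w) := by
  intro φ
  induction φ with
  | atom n =>
    intro w hlf
    have hex : ∃ w', Node.lf w' (SCIForm.atom n) ∈ l := ⟨w, hlf⟩
    simp only [Vd, dif_pos hex]
    exact congrArg Sum.inl (cls_eq_of hs (hs.fr _ w _ hex.choose_spec hlf))
  | not φ ih =>
    intro w hlf
    obtain ⟨-, v, hv, -⟩ := hw _ (hs.dec _ _ hlf (by intro n hn; cases hn))
    show negOp l (Vd l φ) = _
    rw [ih v hv]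
    exact negOp_lf hs hv hlf
  | imp φ ψ ihφ ihψ =>
    intro w hlf
    obtain ⟨-, a, b, ha, hb, -⟩ := hw _ (hs.dec _ _ hlf (by intro n hn; cases hn))
    show impOp l (Vd l φ) (Vd l ψ) = _
    rw [ihφ a ha, ihψ b hb]
    exact impOp_lf hs ha hb hlf
  | idn φ ψ ihφ ihψ =>
    intro w hlf
    obtain ⟨-, a, b, ha, hb, -⟩ := hw _ (hs.dec _ _ hlf (by intro n hn; cases hn))
    show idnOp l (Vd l φ) (Vd l ψ) = _
    rw [ihφ a ha, ihψ b hb]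
    exact idnOp_lf hs ha hb hlf

lemma model_is : IsSCIModel (Mm l) := by
  refine ⟨⟨Sum.inr (SCIForm.atom 0)⟩, ?_, negD hs hw, impD hs hw, idnD hs hw⟩
  rw [Set.ne_univ_iff_exists_notMem]
  exact ⟨Sum.inr (SCIForm.atom 0), by simp [Mm, Dm, Set.mem_def, tval]⟩

omit hs hw in
lemma valu_is : IsValuation (Mm l) (Vd l) :=
  ⟨fun _ => rfl, fun _ _ => rfl, fun _ _ => rfl⟩

theorem countermodel {w : Label} {φ : SCIForm} (hlf : Node.lf w φ ∈ l)
    (hneg : negL w) : ¬ SCIValid φ := by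
  intro hval
  have hd := hval Um (Mm l) (Vd l) (model_is hs hw) valu_is
  rw [Vd_lf hs hw φ w hlf] at hd
  have : w.1 = true := (PosC_cls hs hlf).mp hd
  rw [hneg] at this
  cases this

end Model2
end SCIC
namespace SCIC

/-! ### fresh labels -/

def nIdx : Node → ℕ
  | Node.lf w _ => w.2
  | _ => 0

def mIdx (l : List Node) : ℕ := (l.map nIdx).foldr max 0

lemma le_mIdx {l : List Node} {w : Label} {φ : SCIForm} (h : Node.lf w φ ∈ l) :
    w.2 ≤ mIdx l := by
  induction l with
  | nil => cases h
  | cons a t ih =>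
    rw [List.mem_cons] at h
    rcases h with rfl | h
    · show w.2 ≤ max (nIdx (Node.lf w φ)) (mIdx t)
      exact le_max_of_le_left (le_refl _)
    · show w.2 ≤ max (nIdx a) (mIdx t)
      exact le_trans (ih h) (le_max_right _ _)

lemma fresh_mk (l : List Node) (b : Bool) (k : ℕ) : freshL (b, mIdx l + 1 + k) l := by
  intro φ h
  have := le_mIdx h
  simp at this
  omega

lemma lbl_ne {b c : Bool} {i j : ℕ} (hij : i ≠ j) : ((b, i) : Label) ≠ (c, j) := by
  intro h; injection h with h1 h2; exact hij h2

/-! ### witness preservation -/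

lemma witP_mono {l l' : List Node} {p : Label × SCIForm}
    (hsub : ∀ x, x ∈ l → x ∈ l') (h : WitP l p) : WitP l' p := by
  rcases p with ⟨x, φ⟩
  obtain ⟨h0, hr⟩ := h
  refine ⟨hsub _ h0, ?_⟩
  cases φ with
  | atom n => trivial
  | not φ =>
    obtain ⟨v, hv, hp⟩ := hr
    exact ⟨v, hsub _ hv, hp⟩
  | imp φ ψ =>
    obtain ⟨v, u, hv, hu, hc⟩ := hr
    exact ⟨v, u, hsub _ hv, hsub _ hu, hc⟩
  | idn φ ψ =>
    obtain ⟨v, u, hv, hu, hc⟩ := hr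
    refine ⟨v, u, hsub _ hv, hsub _ hu, ?_⟩
    by_cases hx : x.1 = true
    · rw [if_pos hx] at hc ⊢
      exact hsub _ hc
    · rw [if_neg hx] at hc ⊢
      rcases hc with h' | h'
      · exact Or.inl h'
      · exact Or.inr (hsub _ h')

lemma extend_mono {l E l' E'} (h : Extend l E l' E') : ∀ x ∈ l, x ∈ l' := by
  cases h <;> exact fun x hx => List.mem_append_left _ hx

lemma bnot_of_ne {a b : Bool} (hab : a ≠ b) : a = !b := by
  cases a <;> cases b <;> simp_all

lemma posT {w : Label} (h : posL w) : w.1 = true := h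
lemma negT {w : Label} (h : negL w) : w.1 = false := h

lemma wit_extend {l E l' E'} (hx : Extend l E l' E') (hw : WitAll l E) : WitAll l' E' := by
  have mono : ∀ p ∈ E, WitP l' p := fun p hp => witP_mono (extend_mono hx) (hw p hp)
  cases hx with
  | negP w v φ h1 h2 h3 h4 h5 h6 =>
    intro p hp
    rcases Set.mem_insert_iff.mp hp with rfl | hp
    · refine ⟨List.mem_append_left _ h3, v, by simp, ?_⟩
      show v.1 = !w.1
      rw [negT h5, posT h2]; rfl
    · exact mono p hp
  | negN w v φ h1 h2 h3 h4 h5 h6 =>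
    intro p hp
    rcases Set.mem_insert_iff.mp hp with rfl | hp
    · refine ⟨List.mem_append_left _ h3, v, by simp, ?_⟩
      show v.1 = !w.1
      rw [posT h5, negT h2]; rfl
    · exact mono p hp
  | impP1 w v u φ ψ h1 h2 h3 h4 h5 h6 h7 h8 h9 =>
    intro p hp
    rcases Set.mem_insert_iff.mp hp with rfl | hp
    · refine ⟨List.mem_append_left _ h3, v, u, by simp, by simp, ?_⟩
      show if w.1 = true then (v.1 = false ∨ u.1 = true) else (v.1 = true ∧ u.1 = false)
      rw [if_pos (posT h2)]
      exact Or.inl h5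
    · exact mono p hp
  | impP2 w v u φ ψ h1 h2 h3 h4 h5 h6 h7 h8 h9 =>
    intro p hp
    rcases Set.mem_insert_iff.mp hp with rfl | hp
    · refine ⟨List.mem_append_left _ h3, v, u, by simp, by simp, ?_⟩
      show if w.1 = true then (v.1 = false ∨ u.1 = true) else (v.1 = true ∧ u.1 = false)
      rw [if_pos (posT h2)]
      exact Or.inr h6
    · exact mono p hp
  | impP3 w v u φ ψ h1 h2 h3 h4 h5 h6 h7 h8 h9 =>
    intro p hp
    rcases Set.mem_insert_iff.mp hp with rfl | hp
    · refine ⟨List.mem_append_left _ h3, v, u, by simp, by simp, ?_⟩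
      show if w.1 = true then (v.1 = false ∨ u.1 = true) else (v.1 = true ∧ u.1 = false)
      rw [if_pos (posT h2)]
      exact Or.inr h6
    · exact mono p hp
  | impN w v u φ ψ h1 h2 h3 h4 h5 h6 h7 h8 h9 =>
    intro p hp
    rcases Set.mem_insert_iff.mp hp with rfl | hp
    · refine ⟨List.mem_append_left _ h3, v, u, by simp, by simp, ?_⟩
      show if w.1 = true then (v.1 = false ∨ u.1 = true) else (v.1 = true ∧ u.1 = false)
      rw [if_neg (by rw [negT h2]; simp)]
      exact ⟨posT h5, negT h6⟩
    · exact mono p hp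
  | idnP1 w v u φ ψ h1 h2 h3 h4 h5 h6 h7 h8 h9 =>
    intro p hp
    rcases Set.mem_insert_iff.mp hp with rfl | hp
    · refine ⟨List.mem_append_left _ h3, v, u, by simp, by simp, ?_⟩
      show if w.1 = true then Node.eq v u ∈ _ else (v.1 ≠ u.1 ∨ Node.neq v u ∈ _)
      rw [if_pos (posT h2)]
      simp
    · exact mono p hp
  | idnP2 w v u φ ψ h1 h2 h3 h4 h5 h6 h7 h8 h9 =>
    intro p hp
    rcases Set.mem_insert_iff.mp hp with rfl | hp
    · refine ⟨List.mem_append_left _ h3, v, u, by simp, by simp, ?_⟩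
      show if w.1 = true then Node.eq v u ∈ _ else (v.1 ≠ u.1 ∨ Node.neq v u ∈ _)
      rw [if_pos (posT h2)]
      simp
    · exact mono p hp
  | idnN1 w v u φ ψ h1 h2 h3 h4 h5 h6 h7 h8 h9 =>
    intro p hp
    rcases Set.mem_insert_iff.mp hp with rfl | hp
    · refine ⟨List.mem_append_left _ h3, v, u, by simp, by simp, ?_⟩
      show if w.1 = true then Node.eq v u ∈ _ else (v.1 ≠ u.1 ∨ Node.neq v u ∈ _)
      rw [if_neg (by rw [negT h2]; simp)]
      exact Or.inr (by simp)
    · exact mono p hp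
  | idnN2 w v u φ ψ h1 h2 h3 h4 h5 h6 h7 h8 h9 =>
    intro p hp
    rcases Set.mem_insert_iff.mp hp with rfl | hp
    · refine ⟨List.mem_append_left _ h3, v, u, by simp, by simp, ?_⟩
      show if w.1 = true then Node.eq v u ∈ _ else (v.1 ≠ u.1 ∨ Node.neq v u ∈ _)
      rw [if_neg (by rw [negT h2]; simp)]
      exact Or.inl (by rw [posT h5, negT h6]; simp)
    · exact mono p hp
  | idnN3 w v u φ ψ h1 h2 h3 h4 h5 h6 h7 h8 h9 =>
    intro p hp
    rcases Set.mem_insert_iff.mp hp with rfl | hp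
    · refine ⟨List.mem_append_left _ h3, v, u, by simp, by simp, ?_⟩
      show if w.1 = true then Node.eq v u ∈ _ else (v.1 ≠ u.1 ∨ Node.neq v u ∈ _)
      rw [if_neg (by rw [negT h2]; simp)]
      exact Or.inl (by rw [negT h5, posT h6]; simp)
    · exact mono p hp
  | idnN4 w v u φ ψ h1 h2 h3 h4 h5 h6 h7 h8 h9 =>
    intro p hp
    rcases Set.mem_insert_iff.mp hp with rfl | hp
    · refine ⟨List.mem_append_left _ h3, v, u, by simp, by simp, ?_⟩
      show if w.1 = true then Node.eq v u ∈ _ else (v.1 ≠ u.1 ∨ Node.neq v u ∈ _)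
      rw [if_neg (by rw [negT h2]; simp)]
      exact Or.inr (by simp)
    · exact mono p hp
  | eqNeg w v u y φ ψ h1 h2 h3 h4 h5 h6 h7 => exact mono
  | eqImp w v w' v' x z φ ψ χ θ h1 h2 h3 h4 h5 h6 h7 h8 h9 h10 => exact mono
  | eqIdn w v w' v' x z φ ψ χ θ h1 h2 h3 h4 h5 h6 h7 h8 h9 h10 => exact mono
  | ruleF w v φ h1 h2 h3 h4 => exact mono
  | ruleSym w v h1 h2 h3 => exact mono
  | ruleTran w v u h1 h2 h3 h4 => exact mono
  | bot1 w v h1 h2 h3 => exact mono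
  | bot2 w v h1 h2 h3 h4 => exact mono

/-! ### saturation from non-extendability -/

lemma sat_of_unext (l : List Node) (E : Set (Label × SCIForm)) (hbot : Node.bot ∉ l)
    (hne : ∀ l' E', ¬ Extend l E l' E') : Sat l E := by
  constructor
  · exact hbot
  · intro w v he hn
    exact hne _ _ (Extend.bot1 l E w v hbot he hn)
  · intro w v hp hn hmem
    exact hne _ _ (Extend.bot2 l E w v hbot hp hn hmem)
  · intro w v he
    by_contra h'
    exact hne _ _ (Extend.ruleSym l E w v hbot he h')
  · intro w v u h1 h2
    by_contra h'
    exact hne _ _ (Extend.ruleTran l E w v u hbot h1 h2 h')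
  · intro w v φ h1 h2
    by_contra h'
    exact hne _ _ (Extend.ruleF l E w v φ hbot h1 h2 h')
  · intro w v u y φ ψ h1 h2 h3 h4 h5
    by_contra h'
    exact hne _ _ (Extend.eqNeg l E w v u y φ ψ hbot h1 h2 h3 h4 h5 h')
  · intro w v w' v' x z φ ψ χ θ h1 h2 h3 h4 h5 h6 h7 h8
    by_contra h'
    exact hne _ _ (Extend.eqImp l E w v w' v' x z φ ψ χ θ hbot h1 h2 h3 h4 h5 h6 h7 h8 h')
  · intro w v w' v' x z φ ψ χ θ h1 h2 h3 h4 h5 h6 h7 h8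
    by_contra h'
    exact hne _ _ (Extend.eqIdn l E w v w' v' x z φ ψ χ θ hbot h1 h2 h3 h4 h5 h6 h7 h8 h')
  · intro w φ hlf hna
    by_contra hE
    cases φ with
    | atom n => exact hna n rfl
    | not φ =>
      cases hw1 : w.1 with
      | true =>
        exact hne _ _ (Extend.negP l E w (false, mIdx l + 1 + 0) φ hbot hw1 hlf hE rfl
          (fresh_mk l false 0))
      | false =>
        exact hne _ _ (Extend.negN l E w (true, mIdx l + 1 + 0) φ hbot hw1 hlf hE rfl
          (fresh_mk l true 0))
    | imp φ ψ =>
      cases hw1 : w.1 with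
      | true =>
        exact hne _ _ (Extend.impP1 l E w (false, mIdx l + 1 + 0) (false, mIdx l + 1 + 1) φ ψ
          hbot hw1 hlf hE rfl rfl (lbl_ne (by omega)) (fresh_mk l false 0) (fresh_mk l false 1))
      | false =>
        exact hne _ _ (Extend.impN l E w (true, mIdx l + 1 + 0) (false, mIdx l + 1 + 1) φ ψ
          hbot hw1 hlf hE rfl rfl (lbl_ne (by omega)) (fresh_mk l true 0) (fresh_mk l false 1))
    | idn φ ψ =>
      cases hw1 : w.1 with
      | true =>
        exact hne _ _ (Extend.idnP1 l E w (true, mIdx l + 1 + 0) (true, mIdx l + 1 + 1) φ ψ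
          hbot hw1 hlf hE rfl rfl (lbl_ne (by omega)) (fresh_mk l true 0) (fresh_mk l true 1))
      | false =>
        exact hne _ _ (Extend.idnN1 l E w (true, mIdx l + 1 + 0) (true, mIdx l + 1 + 1) φ ψ
          hbot hw1 hlf hE rfl rfl (lbl_ne (by omega)) (fresh_mk l true 0) (fresh_mk l true 1))

theorem part2 (φ : SCIForm) (hval : SCIValid φ) (w : Label) (hwn : negL w)
    (n : ℕ) (g : ℕ → List Node) (h : ℕ → Set (Label × SCIForm))
    (hg0 : g 0 = [Node.lf w φ]) (hh0 : h 0 = ∅)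
    (hstep : ∀ i < n, Extend (g i) (h i) (g (i + 1)) (h (i + 1)))
    (hstuck : ∀ l' E', ¬ Extend (g n) (h n) l' E') :
    Node.bot ∈ g n := by
  by_contra hbot
  have hmono : ∀ i ≤ n, Node.lf w φ ∈ g i ∧ WitAll (g i) (h i) := by
    intro i
    induction i with
    | zero =>
      intro _
      rw [hg0, hh0]
      exact ⟨by simp, fun p hp => absurd hp (Set.notMem_empty p)⟩
    | succ k ih =>
      intro hk
      have hk' : k < n := hk
      obtain ⟨h1, h2⟩ := ih (le_of_lt hk')
      have hx := hstep k hk'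
      exact ⟨extend_mono hx _ h1, wit_extend hx h2⟩
  obtain ⟨hroot, hwit⟩ := hmono n le_rfl
  have hsat := sat_of_unext _ _ hbot hstuck
  exact countermodel hsat hwit hroot hwn hval

end SCIC
namespace SCIC

/-! ### termination measure -/

def nfp : Node → Option (Label × SCIForm)
  | Node.lf w φ => some (w, φ)
  | _ => none

noncomputable def lfP (l : List Node) : Finset (Label × SCIForm) := (l.filterMap nfp).toFinset

lemma mem_lfP {l : List Node} {p : Label × SCIForm} :
    p ∈ lfP l ↔ Node.lf p.1 p.2 ∈ l := by
  simp only [lfP, List.mem_toFinset, List.mem_filterMap]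
  constructor
  · rintro ⟨n, hn, he⟩
    cases n with
    | lf a b =>
      have hab : (a, b) = p := by simpa [nfp] using he
      rw [← hab]
      exact hn
    | eq a b => simp [nfp] at he
    | neq a b => simp [nfp] at he
    | bot => simp [nfp] at he
  · intro h
    exact ⟨Node.lf p.1 p.2, h, rfl⟩

lemma lfP_append (l t : List Node) : lfP (l ++ t) = lfP l ∪ lfP t := by
  simp [lfP, List.filterMap_append]

noncomputable def pend (l : List Node) (E : Set (Label × SCIForm)) : Finset (Label × SCIForm) :=
  (lfP l).filter fun p => p ∉ E

lemma mem_pend {l E} {p : Label × SCIForm} :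
    p ∈ pend l E ↔ Node.lf p.1 p.2 ∈ l ∧ p ∉ E := by
  unfold pend
  rw [Finset.mem_filter, mem_lfP]

noncomputable def Pm (l : List Node) (E : Set (Label × SCIForm)) : ℕ :=
  (pend l E).sum fun p => 3 ^ SCIForm.size p.2

def labs : Node → List Label
  | Node.lf w _ => [w]
  | Node.eq w v => [w, v]
  | Node.neq w v => [w, v]
  | Node.bot => []

noncomputable def labsF (l : List Node) : Finset Label := (l.flatMap labs).toFinset

lemma mem_labsF {l : List Node} {a : Label} :
    a ∈ labsF l ↔ ∃ n ∈ l, a ∈ labs n := by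
  simp [labsF, List.mem_flatMap]

def isEqN : Node → Bool
  | Node.eq _ _ => true
  | Node.neq _ _ => true
  | _ => false

noncomputable def eqNs (l : List Node) : Finset Node := (l.filter isEqN).toFinset

lemma mem_eqNs {l : List Node} {n : Node} : n ∈ eqNs l ↔ n ∈ l ∧ isEqN n = true := by
  simp [eqNs, List.mem_filter]

lemma card_eqNs_le (l : List Node) : (eqNs l).card ≤ 2 * (labsF l).card ^ 2 := by
  have hsub : eqNs l ⊆ Finset.image
      (fun x : (Label × Label) × Bool =>
        if x.2 then Node.eq x.1.1 x.1.2 else Node.neq x.1.1 x.1.2)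
      (((labsF l) ×ˢ (labsF l)) ×ˢ ({true, false} : Finset Bool)) := by
    intro n hn
    rw [mem_eqNs] at hn
    obtain ⟨hmem, hiseq⟩ := hn
    rw [Finset.mem_image]
    cases n with
    | eq w v =>
      refine ⟨((w, v), true), ?_, rfl⟩
      refine Finset.mem_product.mpr ⟨Finset.mem_product.mpr
        ⟨mem_labsF.mpr ⟨Node.eq w v, hmem, by simp [labs]⟩,
         mem_labsF.mpr ⟨Node.eq w v, hmem, by simp [labs]⟩⟩, by simp⟩
    | neq w v =>
      refine ⟨((w, v), false), ?_, rfl⟩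
      refine Finset.mem_product.mpr ⟨Finset.mem_product.mpr
        ⟨mem_labsF.mpr ⟨Node.neq w v, hmem, by simp [labs]⟩,
         mem_labsF.mpr ⟨Node.neq w v, hmem, by simp [labs]⟩⟩, by simp⟩
    | lf w φ => simp [isEqN] at hiseq
    | bot => simp [isEqN] at hiseq
  calc (eqNs l).card
      ≤ (Finset.image _ (((labsF l) ×ˢ (labsF l)) ×ˢ ({true, false} : Finset Bool))).card :=
        Finset.card_le_card hsub
    _ ≤ (((labsF l) ×ˢ (labsF l)) ×ˢ ({true, false} : Finset Bool)).card :=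
        Finset.card_image_le
    _ ≤ 2 * (labsF l).card ^ 2 := by
        rw [Finset.card_product, Finset.card_product]
        have : ({true, false} : Finset Bool).card ≤ 2 := by decide
        calc (labsF l).card * (labsF l).card * ({true, false} : Finset Bool).card
            ≤ (labsF l).card * (labsF l).card * 2 := Nat.mul_le_mul_left _ this
          _ = 2 * (labsF l).card ^ 2 := by ring

noncomputable def m2 (l : List Node) : ℕ := 2 * (labsF l).card ^ 2 + 1 - (eqNs l).card

lemma labs_lf_mem {l : List Node} {w : Label} {φ : SCIForm} (h : Node.lf w φ ∈ l) :
    w ∈ labsF l := mem_labsF.mpr ⟨Node.lf w φ, h, by simp [labs]⟩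

lemma labs_eq_mem_l {l : List Node} {w v : Label} (h : Node.eq w v ∈ l) : w ∈ labsF l :=
  mem_labsF.mpr ⟨Node.eq w v, h, by simp [labs]⟩

lemma labs_eq_mem_r {l : List Node} {w v : Label} (h : Node.eq w v ∈ l) : v ∈ labsF l :=
  mem_labsF.mpr ⟨Node.eq w v, h, by simp [labs]⟩

lemma Pm_append_eq (l : List Node) (E) (a b : Label) :
    Pm (l ++ [Node.eq a b]) E = Pm l E := by
  unfold Pm pend
  rw [lfP_append]
  have : lfP [Node.eq a b] = ∅ := by simp [lfP, nfp]
  rw [this, Finset.union_empty]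

lemma labsF_append_eq {l : List Node} {a b : Label} (ha : a ∈ labsF l) (hb : b ∈ labsF l) :
    labsF (l ++ [Node.eq a b]) = labsF l := by
  apply Finset.Subset.antisymm
  · intro x hx
    rw [mem_labsF] at hx
    obtain ⟨n, hn, hxn⟩ := hx
    rcases List.mem_append.mp hn with hn | hn
    · exact mem_labsF.mpr ⟨n, hn, hxn⟩
    · rw [List.mem_singleton] at hn
      subst hn
      simp [labs] at hxn
      rcases hxn with rfl | rfl
      · exact ha
      · exact hb
  · intro x hx
    rw [mem_labsF] at hx ⊢
    obtain ⟨n, hn, hxn⟩ := hx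
    exact ⟨n, List.mem_append_left _ hn, hxn⟩

lemma m2_lt {l : List Node} {a b : Label} (ha : a ∈ labsF l) (hb : b ∈ labsF l)
    (hnew : Node.eq a b ∉ l) : m2 (l ++ [Node.eq a b]) < m2 l := by
  have hlab := labsF_append_eq ha hb
  have hins : eqNs (l ++ [Node.eq a b]) = insert (Node.eq a b) (eqNs l) := by
    ext n
    simp only [mem_eqNs, List.mem_append, List.mem_singleton, Finset.mem_insert]
    constructor
    · rintro ⟨hn | rfl, hiq⟩
      · exact Or.inr ⟨hn, hiq⟩
      · exact Or.inl rfl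
    · rintro (rfl | ⟨hn, hiq⟩)
      · exact ⟨Or.inr rfl, rfl⟩
      · exact ⟨Or.inl hn, hiq⟩
  have hcard : (eqNs (l ++ [Node.eq a b])).card = (eqNs l).card + 1 := by
    rw [hins, Finset.card_insert_of_notMem (fun hc => hnew (mem_eqNs.mp hc).1)]
  have hbound := card_eqNs_le (l ++ [Node.eq a b])
  rw [hlab, hcard] at hbound
  rw [m2, m2, hlab, hcard]
  omega

lemma size_pos (φ : SCIForm) : 1 ≤ SCIForm.size φ := by
  cases φ <;> simp [SCIForm.size]

lemma pow3_lt {a b : ℕ} (ha : 1 ≤ a) (hb : 1 ≤ b) : 3 ^ a + 3 ^ b < 3 ^ (a + b + 1) := by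
  have h2a : 2 ≤ 3 ^ a := le_trans (by norm_num) (Nat.pow_le_pow_right (by norm_num) ha)
  have h2b : 2 ≤ 3 ^ b := le_trans (by norm_num) (Nat.pow_le_pow_right (by norm_num) hb)
  calc 3 ^ a + 3 ^ b ≤ 3 ^ a * 3 ^ b := Nat.add_le_mul h2a h2b
    _ = 3 ^ (a + b) := by rw [pow_add]
    _ < 3 ^ (a + b + 1) := Nat.pow_lt_pow_right (by norm_num) (by omega)

lemma sum_base {l : List Node} {E : Set (Label × SCIForm)} {w : Label} {χ : SCIForm}
    (hmem : Node.lf w χ ∈ l) (hE : (w, χ) ∉ E) :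
    Pm l E = 3 ^ SCIForm.size χ +
      ((pend l E).erase (w, χ)).sum (fun p => 3 ^ SCIForm.size p.2) := by
  have hin : (w, χ) ∈ pend l E := mem_pend.mpr ⟨hmem, hE⟩
  rw [Pm, ← Finset.add_sum_erase _ _ hin]

/-- One new labelled formula. -/
lemma Pm_dec1 {l : List Node} {E} {w v : Label} {φ χ : SCIForm}
    (hmem : Node.lf w χ ∈ l) (hE : (w, χ) ∉ E)
    (hfv : freshL v l) (hEl : ∀ p ∈ E, Node.lf p.1 p.2 ∈ l)
    (hsz : SCIForm.size φ < SCIForm.size χ) :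
    Pm (l ++ [Node.lf v φ]) (insert (w, χ) E) < Pm l E := by
  have hpend : pend (l ++ [Node.lf v φ]) (insert (w, χ) E) =
      insert (v, φ) ((pend l E).erase (w, χ)) := by
    ext p
    rw [mem_pend, Finset.mem_insert, Finset.mem_erase, mem_pend]
    simp only [List.mem_append, List.mem_singleton, Set.mem_insert_iff]
    constructor
    · rintro ⟨hp | hp, hni⟩
      · push_neg at hni
        exact Or.inr ⟨hni.1, hp, hni.2⟩
      · cases p with
      | mk p1 p2 =>
        have : p1 = v ∧ p2 = φ := by
          constructor
          · exact congrArg (fun n => match n with | Node.lf a _ => a | _ => v) hp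
          · exact congrArg (fun n => match n with | Node.lf _ b => b | _ => φ) hp
        exact Or.inl (by rw [this.1, this.2])
    · rintro (rfl | ⟨hne, hp, hni⟩)
      · constructor
        · exact Or.inr rfl
        · intro hc
          rcases hc with hc | hc
          · rw [Prod.mk.injEq] at hc
            rw [← hc.1] at hmem
            exact hfv χ hmem
          · exact hfv φ (hEl _ hc)
      · constructor
        · exact Or.inl hp
        · intro hc
          rcases hc with hc | hc
          · exact hne hc
          · exact hni hc
  have hvnotin : (v, φ) ∉ (pend l E).erase (w, χ) := by
    intro hc
    exact hfv φ (mem_pend.mp (Finset.mem_of_mem_erase hc)).1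
  rw [Pm, hpend, Finset.sum_insert hvnotin, sum_base hmem hE]
  have h3 : (3:ℕ) ^ SCIForm.size φ < 3 ^ SCIForm.size χ :=
    Nat.pow_lt_pow_right (by norm_num) hsz
  have hred : ((v, φ) : Label × SCIForm).2.size = φ.size := rfl
  rw [hred]
  omega

/-- Two new labelled formulas (plus possibly an extra Id-node). -/
lemma Pm_dec2 {l t : List Node} {E} {w v u : Label} {φ ψ χ : SCIForm}
    (hmem : Node.lf w χ ∈ l) (hE : (w, χ) ∉ E)
    (hfv : freshL v l) (hfu : freshL u l) (hvu : v ≠ u)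
    (hEl : ∀ p ∈ E, Node.lf p.1 p.2 ∈ l)
    (ht : ∀ p : Label × SCIForm, Node.lf p.1 p.2 ∈ t ↔ (p = (v, φ) ∨ p = (u, ψ)))
    (hsz : SCIForm.size φ + SCIForm.size ψ + 1 = SCIForm.size χ) :
    Pm (l ++ t) (insert (w, χ) E) < Pm l E := by
  have hnotE : ∀ (a : Label) (α : SCIForm), freshL a l → (a, α) ∉ insert (w, χ) E := by
    intro a α hfa hc
    rcases Set.mem_insert_iff.mp hc with hc | hc
    · rw [Prod.mk.injEq] at hc
      rw [← hc.1] at hmem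
      exact hfa χ hmem
    · exact hfa α (hEl _ hc)
  have hpend : pend (l ++ t) (insert (w, χ) E) =
      insert (v, φ) (insert (u, ψ) ((pend l E).erase (w, χ))) := by
    ext p
    rw [mem_pend, Finset.mem_insert, Finset.mem_insert, Finset.mem_erase, mem_pend]
    simp only [List.mem_append]
    constructor
    · rintro ⟨hp | hp, hni⟩
      · rw [Set.mem_insert_iff] at hni
        push_neg at hni
        exact Or.inr (Or.inr ⟨hni.1, hp, hni.2⟩)
      · rcases (ht p).mp hp with rfl | rfl
        · exact Or.inl rfl
        · exact Or.inr (Or.inl rfl)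
    · rintro (rfl | rfl | ⟨hne, hp, hni⟩)
      · exact ⟨Or.inr ((ht _).mpr (Or.inl rfl)), hnotE v φ hfv⟩
      · exact ⟨Or.inr ((ht _).mpr (Or.inr rfl)), hnotE u ψ hfu⟩
      · refine ⟨Or.inl hp, ?_⟩
        intro hc
        rcases Set.mem_insert_iff.mp hc with hc | hc
        · exact hne hc
        · exact hni hc
  have hne12 : (v, φ) ≠ (u, ψ) := fun hc => hvu (congrArg Prod.fst hc)
  have hunotin : (u, ψ) ∉ (pend l E).erase (w, χ) := by
    intro hc
    exact hfu ψ (mem_pend.mp (Finset.mem_of_mem_erase hc)).1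
  have hvnotin : (v, φ) ∉ insert (u, ψ) ((pend l E).erase (w, χ)) := by
    intro hc
    rcases Finset.mem_insert.mp hc with hc | hc
    · exact hne12 hc
    · exact hfv φ (mem_pend.mp (Finset.mem_of_mem_erase hc)).1
  rw [Pm, hpend, Finset.sum_insert hvnotin, Finset.sum_insert hunotin, sum_base hmem hE]
  have h3 := pow3_lt (size_pos φ) (size_pos ψ)
  rw [hsz] at h3
  have hred1 : ((v, φ) : Label × SCIForm).2.size = φ.size := rfl
  have hred2 : ((u, ψ) : Label × SCIForm).2.size = ψ.size := rfl
  rw [hred1, hred2]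
  omega

end SCIC
namespace SCIC

def Goal (l : List Node) (E : Set (Label × SCIForm)) : Prop :=
  ClosedTab l E ∨ ∃ l' E', l <+: l' ∧ Sat l' E' ∧ WitAll l' E'

lemma goal_lift {l E l1 E1} (htail : l <+: l1) (hC : ClosedTab l1 E1 → ClosedTab l E)
    (h : Goal l1 E1) : Goal l E := by
  rcases h with hc | ⟨l', E', hpre, hrest⟩
  · exact Or.inl (hC hc)
  · exact Or.inr ⟨l', E', htail.trans hpre, hrest⟩

lemma bot_notin_app {l t : List Node} (hbot : Node.bot ∉ l) (ht : Node.bot ∉ t) :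
    Node.bot ∉ l ++ t := by
  intro hc
  rcases List.mem_append.mp hc with hc | hc
  · exact hbot hc
  · exact ht hc

lemma ht_two (v u : Label) (φ ψ : SCIForm) (rest : List Node)
    (hrest : ∀ n ∈ rest, nfp n = none) :
    ∀ p : Label × SCIForm,
      Node.lf p.1 p.2 ∈ (Node.lf v φ :: Node.lf u ψ :: rest) ↔ p = (v, φ) ∨ p = (u, ψ) := by
  rintro ⟨p1, p2⟩
  constructor
  · intro h
    rcases List.mem_cons.mp h with h | h
    · injection h with e1 e2
      subst e1; subst e2
      exact Or.inl rfl
    rcases List.mem_cons.mp h with h | h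
    · injection h with e1 e2
      subst e1; subst e2
      exact Or.inr rfl
    · have := hrest _ h
      simp [nfp] at this
  · rintro (h | h) <;> rw [Prod.mk.injEq] at h <;> rw [h.1, h.2]
    · exact List.mem_cons_self
    · exact List.mem_cons_of_mem _ (List.mem_cons_self)

theorem expand : ∀ a b (l : List Node) (E : Set (Label × SCIForm)),
    Pm l E < a → m2 l < b → Node.bot ∉ l → WitAll l E → Goal l E := by
  intro a
  induction a using Nat.strong_induction_on with
  | _ a ihA =>
  intro b
  induction b using Nat.strong_induction_on with
  | _ b ihB =>
  intro l E hP hm hbot hwit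
  have hEl : ∀ p ∈ E, Node.lf p.1 p.2 ∈ l := fun p hp => (hwit p hp).1
  -- closure cases
  by_cases h1 : ∃ w v, Node.eq w v ∈ l ∧ Node.neq w v ∈ l
  · obtain ⟨w, v, he, hn⟩ := h1
    exact Or.inl (ClosedTab.clos1 l E w v he hn)
  by_cases h2 : ∃ w v, posL w ∧ negL v ∧ Node.eq w v ∈ l
  · obtain ⟨w, v, hp, hn, he⟩ := h2
    exact Or.inl (ClosedTab.clos2 l E w v hp hn he)
  -- helper for equality-rule recursion
  have eqrec : ∀ (x y : Label), x ∈ labsF l → y ∈ labsF l → Node.eq x y ∉ l →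
      WitAll (l ++ [Node.eq x y]) E → Goal (l ++ [Node.eq x y]) E := by
    intro x y hx hy hnew hwit'
    exact ihB (m2 l) hm (l ++ [Node.eq x y]) E (by rw [Pm_append_eq]; exact hP)
      (m2_lt hx hy hnew) (bot_notin_app hbot (by simp)) hwit'
  have hwit_eq : ∀ (x y : Label), WitAll (l ++ [Node.eq x y]) E :=
    fun x y p hp => witP_mono (fun n hn => List.mem_append_left _ hn) (hwit p hp)
  -- equality rules
  by_cases h3 : ∃ w v, Node.eq w v ∈ l ∧ Node.eq v w ∉ l
  · obtain ⟨w, v, he, hn⟩ := h3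
    exact goal_lift (List.prefix_append _ _)
      (fun hc => ClosedTab.ruleSym l E w v he hn hc)
      (eqrec v w (labs_eq_mem_r he) (labs_eq_mem_l he) hn (hwit_eq v w))
  by_cases h4 : ∃ w v u, Node.eq w v ∈ l ∧ Node.eq v u ∈ l ∧ Node.eq w u ∉ l
  · obtain ⟨w, v, u, he1, he2, hn⟩ := h4
    exact goal_lift (List.prefix_append _ _)
      (fun hc => ClosedTab.ruleTran l E w v u he1 he2 hn hc)
      (eqrec w u (labs_eq_mem_l he1) (labs_eq_mem_r he2) hn (hwit_eq w u))
  by_cases h5 : ∃ w v φ, Node.lf w φ ∈ l ∧ Node.lf v φ ∈ l ∧ Node.eq w v ∉ l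
  · obtain ⟨w, v, φ, hl1, hl2, hn⟩ := h5
    exact goal_lift (List.prefix_append _ _)
      (fun hc => ClosedTab.ruleF l E w v φ hl1 hl2 hn hc)
      (eqrec w v (labs_lf_mem hl1) (labs_lf_mem hl2) hn (hwit_eq w v))
  by_cases h6 : ∃ w v u y φ ψ, Node.lf w φ ∈ l ∧ Node.lf v ψ ∈ l ∧ Node.eq w v ∈ l ∧
      Node.lf u (SCIForm.not φ) ∈ l ∧ Node.lf y (SCIForm.not ψ) ∈ l ∧ Node.eq u y ∉ l
  · obtain ⟨w, v, u, y, φ, ψ, a1, a2, a3, a4, a5, hn⟩ := h6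
    exact goal_lift (List.prefix_append _ _)
      (fun hc => ClosedTab.eqNeg l E w v u y φ ψ a1 a2 a3 a4 a5 hn hc)
      (eqrec u y (labs_lf_mem a4) (labs_lf_mem a5) hn (hwit_eq u y))
  by_cases h7 : ∃ w v w' v' x z φ ψ χ θ, Node.lf w φ ∈ l ∧ Node.lf v ψ ∈ l ∧
      Node.eq w v ∈ l ∧ Node.lf w' χ ∈ l ∧ Node.lf v' θ ∈ l ∧ Node.eq w' v' ∈ l ∧
      Node.lf x (SCIForm.imp φ χ) ∈ l ∧ Node.lf z (SCIForm.imp ψ θ) ∈ l ∧ Node.eq x z ∉ l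
  · obtain ⟨w, v, w', v', x, z, φ, ψ, χ, θ, a1, a2, a3, a4, a5, a6, a7, a8, hn⟩ := h7
    exact goal_lift (List.prefix_append _ _)
      (fun hc => ClosedTab.eqImp l E w v w' v' x z φ ψ χ θ a1 a2 a3 a4 a5 a6 a7 a8 hn hc)
      (eqrec x z (labs_lf_mem a7) (labs_lf_mem a8) hn (hwit_eq x z))
  by_cases h8 : ∃ w v w' v' x z φ ψ χ θ, Node.lf w φ ∈ l ∧ Node.lf v ψ ∈ l ∧
      Node.eq w v ∈ l ∧ Node.lf w' χ ∈ l ∧ Node.lf v' θ ∈ l ∧ Node.eq w' v' ∈ l ∧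
      Node.lf x (SCIForm.idn φ χ) ∈ l ∧ Node.lf z (SCIForm.idn ψ θ) ∈ l ∧ Node.eq x z ∉ l
  · obtain ⟨w, v, w', v', x, z, φ, ψ, χ, θ, a1, a2, a3, a4, a5, a6, a7, a8, hn⟩ := h8
    exact goal_lift (List.prefix_append _ _)
      (fun hc => ClosedTab.eqIdn l E w v w' v' x z φ ψ χ θ a1 a2 a3 a4 a5 a6 a7 a8 hn hc)
      (eqrec x z (labs_lf_mem a7) (labs_lf_mem a8) hn (hwit_eq x z))
  -- decomposition
  by_cases h9 : ∃ w φ, Node.lf w φ ∈ l ∧ (∀ n, φ ≠ SCIForm.atom n) ∧ (w, φ) ∉ E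
  · obtain ⟨w, χ, hlf, hna, hEc⟩ := h9
    -- recursion helper for decomposition branches
    have decrec : ∀ (t : List Node) (E1 : Set (Label × SCIForm)),
        Pm (l ++ t) E1 < Pm l E → Node.bot ∉ t → WitAll (l ++ t) E1 → Goal (l ++ t) E1 := by
      intro t E1 hPd hbt hwit'
      exact ihA (Pm l E) hP (m2 (l ++ t) + 1) (l ++ t) E1 hPd (Nat.lt_succ_self _)
        (bot_notin_app hbot hbt) hwit'
    cases χ with
    | atom n => exact absurd rfl (hna n)
    | not φ =>
      cases hpol : w.1 with
      | true =>
        have hfv := fresh_mk l false 0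
        have hx : Extend l E (l ++ [Node.lf (false, mIdx l + 1 + 0) φ])
            (insert (w, SCIForm.not φ) E) :=
          Extend.negP l E w _ φ hbot hpol hlf hEc rfl hfv
        have res := decrec _ _ (Pm_dec1 hlf hEc hfv hEl (by simp [SCIForm.size]))
          (by simp) (wit_extend hx hwit)
        exact goal_lift (List.prefix_append _ _)
          (fun hc => ClosedTab.negP l E w (false, mIdx l + 1 + 0) φ hpol hlf hEc rfl hfv hc) res
      | false =>
        have hfv := fresh_mk l true 0
        have hx : Extend l E (l ++ [Node.lf (true, mIdx l + 1 + 0) φ])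
            (insert (w, SCIForm.not φ) E) :=
          Extend.negN l E w _ φ hbot hpol hlf hEc rfl hfv
        have res := decrec _ _ (Pm_dec1 hlf hEc hfv hEl (by simp [SCIForm.size]))
          (by simp) (wit_extend hx hwit)
        exact goal_lift (List.prefix_append _ _)
          (fun hc => ClosedTab.negN l E w (true, mIdx l + 1 + 0) φ hpol hlf hEc rfl hfv hc) res
    | imp φ ψ =>
      cases hpol : w.1 with
      | true =>
        have hfv := fresh_mk l false 0
        have hfu := fresh_mk l false 1
        have hfv' := fresh_mk l false 0
        have hfu' := fresh_mk l true 1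
        have hfv'' := fresh_mk l true 0
        have hfu'' := fresh_mk l true 1
        have hne : ∀ (b c : Bool), ((b, mIdx l + 1 + 0) : Label) ≠ (c, mIdx l + 1 + 1) :=
          fun b c => lbl_ne (by omega)
        have hx1 : Extend l E _ _ :=
          Extend.impP1 l E w (false, mIdx l + 1 + 0) (false, mIdx l + 1 + 1) φ ψ
            hbot hpol hlf hEc rfl rfl (hne _ _) hfv hfu
        have hx2 : Extend l E _ _ :=
          Extend.impP2 l E w (false, mIdx l + 1 + 0) (true, mIdx l + 1 + 1) φ ψ
            hbot hpol hlf hEc rfl rfl (hne _ _) hfv' hfu'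
        have hx3 : Extend l E _ _ :=
          Extend.impP3 l E w (true, mIdx l + 1 + 0) (true, mIdx l + 1 + 1) φ ψ
            hbot hpol hlf hEc rfl rfl (hne _ _) hfv'' hfu''
        have res1 := decrec _ _
          (Pm_dec2 hlf hEc hfv hfu (hne _ _) hEl (ht_two _ _ φ ψ [] (by simp)) rfl)
          (by simp) (wit_extend hx1 hwit)
        have res2 := decrec _ _
          (Pm_dec2 hlf hEc hfv' hfu' (hne _ _) hEl (ht_two _ _ φ ψ [] (by simp)) rfl)
          (by simp) (wit_extend hx2 hwit)
        have res3 := decrec _ _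
          (Pm_dec2 hlf hEc hfv'' hfu'' (hne _ _) hEl (ht_two _ _ φ ψ [] (by simp)) rfl)
          (by simp) (wit_extend hx3 hwit)
        rcases res1 with hc1 | ⟨l', E', hpre, hrest⟩
        · rcases res2 with hc2 | ⟨l', E', hpre, hrest⟩
          · rcases res3 with hc3 | ⟨l', E', hpre, hrest⟩
            · exact Or.inl (ClosedTab.impP l E w φ ψ (false, mIdx l + 1 + 0) (false, mIdx l + 1 + 1)
                (false, mIdx l + 1 + 0) (true, mIdx l + 1 + 1)
                (true, mIdx l + 1 + 0) (true, mIdx l + 1 + 1) hpol hlf hEc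
                rfl rfl (hne _ _) hfv hfu
                rfl rfl (hne _ _) hfv' hfu'
                rfl rfl (hne _ _) hfv'' hfu'' hc1 hc2 hc3)
            · exact Or.inr ⟨l', E', (List.prefix_append _ _).trans hpre, hrest⟩
          · exact Or.inr ⟨l', E', (List.prefix_append _ _).trans hpre, hrest⟩
        · exact Or.inr ⟨l', E', (List.prefix_append _ _).trans hpre, hrest⟩
      | false =>
        have hfv := fresh_mk l true 0
        have hfu := fresh_mk l false 1
        have hnevu : ((true, mIdx l + 1 + 0) : Label) ≠ (false, mIdx l + 1 + 1) :=
          lbl_ne (by omega)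
        have hx : Extend l E _ _ :=
          Extend.impN l E w (true, mIdx l + 1 + 0) (false, mIdx l + 1 + 1) φ ψ
            hbot hpol hlf hEc rfl rfl hnevu hfv hfu
        have res := decrec _ _
          (Pm_dec2 hlf hEc hfv hfu hnevu hEl (ht_two _ _ φ ψ [] (by simp)) rfl)
          (by simp) (wit_extend hx hwit)
        exact goal_lift (List.prefix_append _ _)
          (fun hc => ClosedTab.impN l E w (true, mIdx l + 1 + 0) (false, mIdx l + 1 + 1) φ ψ hpol hlf hEc rfl rfl hnevu hfv hfu hc) res
    | idn φ ψ =>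
      have hrest_eq : ∀ (x y : Label), ∀ n ∈ [Node.eq x y], nfp n = none := by
        intro x y n hn
        rw [List.mem_singleton] at hn
        subst hn; rfl
      have hrest_neq : ∀ (x y : Label), ∀ n ∈ [Node.neq x y], nfp n = none := by
        intro x y n hn
        rw [List.mem_singleton] at hn
        subst hn; rfl
      cases hpol : w.1 with
      | true =>
        have hfv := fresh_mk l true 0
        have hfu := fresh_mk l true 1
        have hfv' := fresh_mk l false 0
        have hfu' := fresh_mk l false 1
        have hne : ∀ (b c : Bool), ((b, mIdx l + 1 + 0) : Label) ≠ (c, mIdx l + 1 + 1) :=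
          fun b c => lbl_ne (by omega)
        have hx1 : Extend l E _ _ :=
          Extend.idnP1 l E w (true, mIdx l + 1 + 0) (true, mIdx l + 1 + 1) φ ψ
            hbot hpol hlf hEc rfl rfl (hne _ _) hfv hfu
        have hx2 : Extend l E _ _ :=
          Extend.idnP2 l E w (false, mIdx l + 1 + 0) (false, mIdx l + 1 + 1) φ ψ
            hbot hpol hlf hEc rfl rfl (hne _ _) hfv' hfu'
        have res1 := decrec _ _
          (Pm_dec2 hlf hEc hfv hfu (hne _ _) hEl (ht_two _ _ φ ψ _ (hrest_eq _ _)) rfl)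
          (by simp) (wit_extend hx1 hwit)
        have res2 := decrec _ _
          (Pm_dec2 hlf hEc hfv' hfu' (hne _ _) hEl (ht_two _ _ φ ψ _ (hrest_eq _ _)) rfl)
          (by simp) (wit_extend hx2 hwit)
        rcases res1 with hc1 | ⟨l', E', hpre, hrest⟩
        · rcases res2 with hc2 | ⟨l', E', hpre, hrest⟩
          · exact Or.inl (ClosedTab.idnP l E w φ ψ (true, mIdx l + 1 + 0) (true, mIdx l + 1 + 1)
              (false, mIdx l + 1 + 0) (false, mIdx l + 1 + 1) hpol hlf hEc
              rfl rfl (hne _ _) hfv hfu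
              rfl rfl (hne _ _) hfv' hfu' hc1 hc2)
          · exact Or.inr ⟨l', E', (List.prefix_append _ _).trans hpre, hrest⟩
        · exact Or.inr ⟨l', E', (List.prefix_append _ _).trans hpre, hrest⟩
      | false =>
        have hf1v := fresh_mk l true 0
        have hf1u := fresh_mk l true 1
        have hf2v := fresh_mk l true 0
        have hf2u := fresh_mk l false 1
        have hf3v := fresh_mk l false 0
        have hf3u := fresh_mk l true 1
        have hf4v := fresh_mk l false 0
        have hf4u := fresh_mk l false 1
        have hne : ∀ (b c : Bool), ((b, mIdx l + 1 + 0) : Label) ≠ (c, mIdx l + 1 + 1) :=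
          fun b c => lbl_ne (by omega)
        have hx1 : Extend l E _ _ :=
          Extend.idnN1 l E w (true, mIdx l + 1 + 0) (true, mIdx l + 1 + 1) φ ψ
            hbot hpol hlf hEc rfl rfl (hne _ _) hf1v hf1u
        have hx2 : Extend l E _ _ :=
          Extend.idnN2 l E w (true, mIdx l + 1 + 0) (false, mIdx l + 1 + 1) φ ψ
            hbot hpol hlf hEc rfl rfl (hne _ _) hf2v hf2u
        have hx3 : Extend l E _ _ :=
          Extend.idnN3 l E w (false, mIdx l + 1 + 0) (true, mIdx l + 1 + 1) φ ψ
            hbot hpol hlf hEc rfl rfl (hne _ _) hf3v hf3u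
        have hx4 : Extend l E _ _ :=
          Extend.idnN4 l E w (false, mIdx l + 1 + 0) (false, mIdx l + 1 + 1) φ ψ
            hbot hpol hlf hEc rfl rfl (hne _ _) hf4v hf4u
        have res1 := decrec _ _
          (Pm_dec2 hlf hEc hf1v hf1u (hne _ _) hEl (ht_two _ _ φ ψ _ (hrest_neq _ _)) rfl)
          (by simp) (wit_extend hx1 hwit)
        have res2 := decrec _ _
          (Pm_dec2 hlf hEc hf2v hf2u (hne _ _) hEl (ht_two _ _ φ ψ [] (by simp)) rfl)
          (by simp) (wit_extend hx2 hwit)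
        have res3 := decrec _ _
          (Pm_dec2 hlf hEc hf3v hf3u (hne _ _) hEl (ht_two _ _ φ ψ [] (by simp)) rfl)
          (by simp) (wit_extend hx3 hwit)
        have res4 := decrec _ _
          (Pm_dec2 hlf hEc hf4v hf4u (hne _ _) hEl (ht_two _ _ φ ψ _ (hrest_neq _ _)) rfl)
          (by simp) (wit_extend hx4 hwit)
        rcases res1 with hc1 | ⟨l', E', hpre, hrest⟩
        · rcases res2 with hc2 | ⟨l', E', hpre, hrest⟩
          · rcases res3 with hc3 | ⟨l', E', hpre, hrest⟩
            · rcases res4 with hc4 | ⟨l', E', hpre, hrest⟩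
              · exact Or.inl (ClosedTab.idnN l E w φ ψ (true, mIdx l + 1 + 0) (true, mIdx l + 1 + 1)
                  (true, mIdx l + 1 + 0) (false, mIdx l + 1 + 1)
                  (false, mIdx l + 1 + 0) (true, mIdx l + 1 + 1)
                  (false, mIdx l + 1 + 0) (false, mIdx l + 1 + 1) hpol hlf hEc
                  rfl rfl (hne _ _) hf1v hf1u
                  rfl rfl (hne _ _) hf2v hf2u
                  rfl rfl (hne _ _) hf3v hf3u
                  rfl rfl (hne _ _) hf4v hf4u hc1 hc2 hc3 hc4)
              · exact Or.inr ⟨l', E', (List.prefix_append _ _).trans hpre, hrest⟩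
            · exact Or.inr ⟨l', E', (List.prefix_append _ _).trans hpre, hrest⟩
          · exact Or.inr ⟨l', E', (List.prefix_append _ _).trans hpre, hrest⟩
        · exact Or.inr ⟨l', E', (List.prefix_append _ _).trans hpre, hrest⟩
  -- saturated
  · refine Or.inr ⟨l, E, List.prefix_refl l, ?_, hwit⟩
    constructor
    · exact hbot
    · exact fun w v he hn => h1 ⟨w, v, he, hn⟩
    · exact fun w v hp hn he => h2 ⟨w, v, hp, hn, he⟩
    · exact fun w v he => Classical.byContradiction fun hn => h3 ⟨w, v, he, hn⟩
    · exact fun w v u he1 he2 => Classical.byContradiction fun hn => h4 ⟨w, v, u, he1, he2, hn⟩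
    · exact fun w v φ hl1 hl2 => Classical.byContradiction fun hn => h5 ⟨w, v, φ, hl1, hl2, hn⟩
    · exact fun w v u y φ ψ a1 a2 a3 a4 a5 =>
        Classical.byContradiction fun hn => h6 ⟨w, v, u, y, φ, ψ, a1, a2, a3, a4, a5, hn⟩
    · exact fun w v w' v' x z φ ψ χ θ a1 a2 a3 a4 a5 a6 a7 a8 =>
        Classical.byContradiction fun hn =>
          h7 ⟨w, v, w', v', x, z, φ, ψ, χ, θ, a1, a2, a3, a4, a5, a6, a7, a8, hn⟩
    · exact fun w v w' v' x z φ ψ χ θ a1 a2 a3 a4 a5 a6 a7 a8 =>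
        Classical.byContradiction fun hn =>
          h8 ⟨w, v, w', v', x, z, φ, ψ, χ, θ, a1, a2, a3, a4, a5, a6, a7, a8, hn⟩
    · exact fun w φ hl hna => Classical.byContradiction fun hn => h9 ⟨w, φ, hl, hna, hn⟩

theorem part1 (φ : SCIForm) (hval : SCIValid φ) (w : Label) (hwn : negL w) :
    ClosedTab [Node.lf w φ] ∅ := by
  rcases expand (Pm [Node.lf w φ] ∅ + 1) (m2 [Node.lf w φ] + 1) [Node.lf w φ] ∅
      (Nat.lt_succ_self _) (Nat.lt_succ_self _) (by simp)
      (fun p hp => absurd hp (Set.notMem_empty p)) with hc | ⟨l', E', hpre, hsat, hwit⟩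
  · exact hc
  · exact absurd hval
      (countermodel hsat hwit (hpre.subset (List.mem_cons_self)) hwn)

end SCIC
/-- completeness of TC_SCI.  If an SCI-formula φ is SCI-valid,
then φ has a tableau proof, i.e., there is a closed TC_SCI-tableau with
w⁻ : φ (w⁻ ∈ L⁻) at its root; equivalently, every fully expanded TC_SCI-tableau
with w⁻ : φ at its root is closed (every fully expanded branch developed from
the root w⁻ : φ carries ⊥). -/
theorem stmt_13 (φ : SCIForm) (hval : SCIValid φ) :
    (∀ w : Label, negL w → ClosedTab [Node.lf w φ] ∅) ∧
    (∀ w : Label, negL w →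
      ∀ (n : ℕ) (g : ℕ → List Node) (h : ℕ → Set (Label × SCIForm)),
        g 0 = [Node.lf w φ] → h 0 = ∅ →
        (∀ i < n, Extend (g i) (h i) (g (i + 1)) (h (i + 1))) →
        (∀ l' E', ¬ Extend (g n) (h n) l' E') →
        Node.bot ∈ g n) := by
  exact ⟨fun w hw => SCIC.part1 φ hval w hw,
    fun w hw n g h hg0 hh0 hstep hstuck => SCIC.part2 φ hval w hw n g h hg0 hh0 hstep hstuck⟩
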